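/- Let q be a prime power and U a k-dimensional 𝔽_q-subspace of 𝔽_{q^n} such that the minimum distance of Orb(U) satisfies d(Orb(U)) = 2(k−ℓ) > 2. Then k ≤ (n+ℓ)/2. Moreover, if Orb(U) is a full-length orbit code, then k < (n+ℓ)/2; in particular, in that case: (a) if ℓ = 1 then k ≤ n/2, and (b) if ℓ = 2 and n is odd then k ≤ (n+1)/2. -/
import Mathlib

noncomputable def shiftSub (K L : Type*) [Field K] [Field L] [Algebra K L]
    (α : L) (U : Submodule K L) : Submodule K L :=
  U.map (LinearMap.mulLeft K α)

noncomputable def orbCode (K L : Type*) [Field K] [Field L] [Algebra K L]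
    (U : Submodule K L) : Set (Submodule K L) :=
  {V | ∃ α : L, α ≠ 0 ∧ V = shiftSub K L α U}

noncomputable def subDist (K L : Type*) [Field K] [Field L] [Algebra K L]
    (k : ℕ) (V W : Submodule K L) : ℕ :=
  2 * (k - Module.finrank K ↥(V ⊓ W))

noncomputable def minDist (K L : Type*) [Field K] [Field L] [Algebra K L]
    (k : ℕ) (C : Set (Submodule K L)) : ℕ :=
  sInf {d : ℕ | ∃ V ∈ C, ∃ W ∈ C, V ≠ W ∧ d = subDist K L k V W}

def stabSet (K L : Type*) [Field K] [Field L] [Algebra K L] (U : Submodule K L) : Set L :=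
  {α : L | α ≠ 0 ∧ shiftSub K L α U = U}

def baseUnits (K L : Type*) [Field K] [Field L] [Algebra K L] : Set L :=
  {α : L | α ≠ 0 ∧ ∃ c : K, algebraMap K L c = α}

section Aux
variable {K L : Type*} [Field K] [Field L] [Algebra K L]

lemma mem_shiftSub {α : L} (hα : α ≠ 0) (U : Submodule K L) (x : L) :
    x ∈ shiftSub K L α U ↔ α⁻¹ * x ∈ U := by
  simp only [shiftSub, Submodule.mem_map, LinearMap.mulLeft_apply]
  constructor
  · rintro ⟨u, hu, rfl⟩; rwa [inv_mul_cancel_left₀ hα]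
  · intro h; exact ⟨α⁻¹ * x, h, by field_simp⟩

lemma shiftSub_shiftSub (α β : L) (U : Submodule K L) :
    shiftSub K L α (shiftSub K L β U) = shiftSub K L (α * β) U := by
  unfold shiftSub
  rw [← Submodule.map_comp, ← LinearMap.mulLeft_mul]

lemma shiftSub_one (U : Submodule K L) : shiftSub K L 1 U = U := by
  unfold shiftSub
  rw [LinearMap.mulLeft_one]
  exact Submodule.map_id U

noncomputable def shiftEquiv {α : L} (hα : α ≠ 0) : L ≃ₗ[K] L :=
  LinearEquiv.ofLinear (LinearMap.mulLeft K α) (LinearMap.mulLeft K α⁻¹)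
    (by ext x; simp [mul_inv_cancel_left₀ hα]) (by ext x; simp [inv_mul_cancel_left₀ hα])

lemma finrank_shiftSub {α : L} (hα : α ≠ 0) (U : Submodule K L) :
    Module.finrank K ↥(shiftSub K L α U) = Module.finrank K ↥U := by
  have : shiftSub K L α U = U.map (shiftEquiv (K := K) hα : L →ₗ[K] L) := rfl
  rw [this, LinearEquiv.finrank_map_eq]

lemma shiftSub_inv_ne {α : L} (hα : α ≠ 0) (U : Submodule K L)
    (h : shiftSub K L α U ≠ U) : shiftSub K L α⁻¹ U ≠ U := by
  intro he
  apply h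
  conv_lhs => rw [← he]
  rw [shiftSub_shiftSub, mul_inv_cancel₀ hα, shiftSub_one]

end Aux

lemma orbNumeric (q n k ℓ : ℕ) (hq2 : 2 ≤ q) (hkl : ℓ + 2 ≤ k) (h2k : 2 * k = n + ℓ)
    (hE : (q - 1) * (q ^ k - 1) + ((q ^ n - 1) - (q - 1)) * (q ^ ℓ - 1)
        = (q ^ k - 1) * (q ^ k - 1)) : False := by
  have hk1 : 1 ≤ k := by omega
  have hn : k + 2 ≤ n := by omega
  have h1k : 1 ≤ q ^ k := Nat.one_le_pow _ _ (by omega)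
  have h1l : 1 ≤ q ^ ℓ := Nat.one_le_pow _ _ (by omega)
  have h1n' : 1 ≤ q ^ n := Nat.one_le_pow _ _ (by omega)
  have h1n : q ≤ q ^ n := Nat.le_self_pow (by omega) q
  zify [h1k, h1l, (by omega : 1 ≤ q), (by omega : q - 1 ≤ q ^ n - 1), h1n'] at hE
  set Q : ℤ := (q : ℤ) with hQdef
  have hQ2 : (2 : ℤ) ≤ Q := by rw [hQdef]; exact_mod_cast hq2
  have hab : Q ^ k = Q * Q ^ (k - 1) := by rw [← pow_succ']; congr 1; omega
  have hqn : Q ^ n = Q * Q ^ (n - 1) := by rw [← pow_succ']; congr 1; omega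
  have hprod : Q ^ k * Q ^ (k - 1) = Q ^ (n - 1) * Q ^ ℓ := by
    rw [← pow_add, ← pow_add]; congr 1; omega
  have hQ0 : Q ≠ 0 := by omega
  have h2 : (Q ^ k - 1) * (Q ^ (k - 1) - 1) = (Q ^ (n - 1) - 1) * (Q ^ ℓ - 1) := by
    apply mul_left_cancel₀ hQ0
    linear_combination (1 - Q ^ k) * hab - hE + (Q ^ ℓ - 1) * hqn
  have h3 : Q ^ (n - 1) + Q ^ ℓ = Q ^ k + Q ^ (k - 1) := by
    linear_combination h2 - hprod
  have hb1 : (1 : ℤ) ≤ Q ^ (k - 1) := one_le_pow₀ (by omega)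
  have hd1 : (1 : ℤ) ≤ Q ^ ℓ := one_le_pow₀ (by omega)
  have ha1 : (1 : ℤ) ≤ Q ^ k := one_le_pow₀ (by omega)
  have hc : Q * Q ^ k ≤ Q ^ (n - 1) := by
    rw [← pow_succ']
    exact pow_le_pow_right₀ (by omega) (by omega)
  have t1 : 2 * Q ^ k ≤ Q * Q ^ k := by nlinarith
  have t2 : 2 * Q ^ (k - 1) ≤ Q * Q ^ (k - 1) := by nlinarith
  linarith [hab, h3, hc, t1, t2, hb1, hd1]

open Finset in
theorem statement_1 (q n k ℓ : ℕ) (hq : IsPrimePow q)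
    (K L : Type*) [Field K] [Field L] [Algebra K L] [Fintype K] [Fintype L]
    (hK : Fintype.card K = q) (hL : Fintype.card L = q ^ n)
    (U : Submodule K L) (hUk : Module.finrank K ↥U = k)
    (hd : minDist K L k (orbCode K L U) = 2 * (k - ℓ))
    (hd2 : 2 < minDist K L k (orbCode K L U)) :
    2 * k ≤ n + ℓ ∧
      (stabSet K L U = baseUnits K L →
        2 * k < n + ℓ ∧ (ℓ = 1 → 2 * k ≤ n) ∧ (ℓ = 2 → Odd n → 2 * k ≤ n + 1)) := by
  classical
  have hq2 : 2 ≤ q := hq.two_le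
  haveI : FiniteDimensional K L := Module.Finite.of_finite
  -- finrank K L = n
  have hfrL : Module.finrank K L = n := by
    have h := Module.card_eq_pow_finrank (K := K) (V := L)
    rw [hK, hL] at h
    exact (Nat.pow_right_injective hq2 h.symm)
  -- k - ℓ ≥ 2
  have hkl : ℓ + 2 ≤ k := by rw [hd] at hd2; omega
  -- U ∈ orbCode
  have hUmem : U ∈ orbCode K L U := ⟨1, one_ne_zero, (shiftSub_one U).symm⟩
  -- dim bound from minDist
  have dim_le : ∀ α : L, α ≠ 0 → shiftSub K L α U ≠ U →
      Module.finrank K ↥(U ⊓ shiftSub K L α U) ≤ ℓ := by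
    intro α hα hne
    have hmem : subDist K L k U (shiftSub K L α U) ∈
        {d : ℕ | ∃ V ∈ orbCode K L U, ∃ W ∈ orbCode K L U, V ≠ W ∧ d = subDist K L k V W} :=
      ⟨U, hUmem, shiftSub K L α U, ⟨α, hα, rfl⟩, Ne.symm hne, rfl⟩
    have hle : minDist K L k (orbCode K L U) ≤ subDist K L k U (shiftSub K L α U) :=
      Nat.sInf_le hmem
    rw [hd] at hle
    unfold subDist at hle
    omega
  -- existence of a non-stabilizing α
  have hexists : ∃ α : L, α ≠ 0 ∧ shiftSub K L α U ≠ U := by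
    by_contra h
    push_neg at h
    have hempty : {d : ℕ | ∃ V ∈ orbCode K L U, ∃ W ∈ orbCode K L U,
        V ≠ W ∧ d = subDist K L k V W} = ∅ := by
      ext d
      simp only [Set.mem_setOf_eq, Set.mem_empty_iff_false, iff_false]
      rintro ⟨V, ⟨a, ha, rfl⟩, W, ⟨b, hb, rfl⟩, hne, -⟩
      exact hne (by rw [h a ha, h b hb])
    rw [minDist, hempty, Nat.sInf_empty] at hd2
    omega
  -- sup-inf dimension bound
  have sup_bound : ∀ α : L, α ≠ 0 →
      2 * k ≤ n + Module.finrank K ↥(U ⊓ shiftSub K L α U) := by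
    intro α hα
    have h1 := Submodule.finrank_sup_add_finrank_inf_eq U (shiftSub K L α U)
    have h2 : Module.finrank K ↥(U ⊔ shiftSub K L α U) ≤ n := hfrL ▸ Submodule.finrank_le _
    rw [hUk, finrank_shiftSub hα U, hUk] at h1
    omega
  obtain ⟨α₀, hα₀, hne₀⟩ := hexists
  have part1 : 2 * k ≤ n + ℓ := by
    have := sup_bound α₀ hα₀
    have := dim_le α₀ hα₀ hne₀
    omega
  refine ⟨part1, fun hfull => ?_⟩
  suffices hstrict : 2 * k < n + ℓ by exact ⟨hstrict, fun h1 => by omega, fun h2 _ => by omega⟩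
  by_cases hall : ∀ β : L, β ≠ 0 → shiftSub K L β U ≠ U →
      Module.finrank K ↥(U ⊓ shiftSub K L β U) = ℓ
  · -- counting argument
    by_contra hge
    have h2k : 2 * k = n + ℓ := by omega
    -- cardinality of nonzero part of a submodule
    have hcard : ∀ W : Submodule K L,
        (univ.filter (fun v : L => v ∈ W ∧ v ≠ 0)).card
          = q ^ Module.finrank K ↥W - 1 := by
      intro W
      have h0 : (univ.filter (fun v : L => v ∈ W)).card = Fintype.card ↥W := by
        rw [Fintype.card_subtype]
      have he : (univ.filter (fun v : L => v ∈ W ∧ v ≠ 0))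
          = (univ.filter (fun v : L => v ∈ W)).erase 0 := by
        ext x
        simp only [mem_filter, mem_univ, true_and, Finset.mem_erase]
        tauto
      rw [he, Finset.card_erase_of_mem (by simp [W.zero_mem]), h0,
        Module.card_eq_pow_finrank (K := K) (V := ↥W), hK]
    set Uf : Finset L := univ.filter (fun v : L => v ∈ U ∧ v ≠ 0) with hUf_def
    set A : Finset L := univ.filter (fun α : L => α ≠ 0) with hA_def
    have hUf : Uf.card = q ^ k - 1 := by rw [hUf_def, hcard U, hUk]
    have hAcard : A.card = q ^ n - 1 := by
      rw [hA_def, Finset.filter_ne', Finset.card_erase_of_mem (Finset.mem_univ 0),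
        Finset.card_univ, hL]
    -- the double counting
    have hbij : ∀ v ∈ Uf, (A.filter (fun α => α * v ∈ U)).card = Uf.card := by
      intro v hv
      rw [hUf_def, mem_filter] at hv
      obtain ⟨-, hvU, hv0⟩ := hv
      apply Finset.card_bij (fun α _ => α * v)
      · intro a ha
        rw [mem_filter] at ha ⊢
        rw [hA_def, mem_filter] at ha
        exact ⟨Finset.mem_univ _, ha.2, mul_ne_zero ha.1.2 hv0⟩
      · intro a ha b hb hab
        exact mul_right_cancel₀ hv0 hab
      · intro u hu
        rw [hUf_def, mem_filter] at hu
        refine ⟨u * v⁻¹, ?_, by field_simp⟩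
        rw [mem_filter, hA_def, mem_filter]
        have : u * v⁻¹ * v = u := by field_simp
        exact ⟨⟨Finset.mem_univ _, mul_ne_zero hu.2.2 (inv_ne_zero hv0)⟩, by rw [this]; exact hu.2.1⟩
    have hsum : ∑ α ∈ A, (Uf.filter (fun v => α * v ∈ U)).card = Uf.card * Uf.card := by
      calc ∑ α ∈ A, (Uf.filter (fun v => α * v ∈ U)).card
          = ∑ α ∈ A, ∑ v ∈ Uf, if α * v ∈ U then 1 else 0 :=
            Finset.sum_congr rfl fun α _ => (Finset.sum_boole _ _).symm
        _ = ∑ v ∈ Uf, ∑ α ∈ A, if α * v ∈ U then 1 else 0 := Finset.sum_comm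
        _ = ∑ v ∈ Uf, (A.filter (fun α => α * v ∈ U)).card :=
            Finset.sum_congr rfl fun v _ => Finset.sum_boole _ _
        _ = ∑ v ∈ Uf, Uf.card := Finset.sum_congr rfl hbij
        _ = Uf.card * Uf.card := by rw [Finset.sum_const, smul_eq_mul]
    -- split the sum over stabilizer / non-stabilizer
    have hsplit := Finset.sum_filter_add_sum_filter_not A (fun α => shiftSub K L α U = U)
      (fun α => (Uf.filter (fun v => α * v ∈ U)).card)
    set Sf : Finset L := A.filter (fun α => shiftSub K L α U = U) with hSf_def
    set Tf : Finset L := A.filter (fun α => ¬shiftSub K L α U = U) with hTf_def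
    -- stabilizer terms
    have hstab_term : ∀ α ∈ Sf, (Uf.filter (fun v => α * v ∈ U)).card = q ^ k - 1 := by
      intro α hα
      rw [hSf_def, mem_filter, hA_def, mem_filter] at hα
      obtain ⟨⟨-, hα0⟩, hαU⟩ := hα
      have : Uf.filter (fun v => α * v ∈ U) = Uf := by
        apply Finset.filter_true_of_mem
        intro v hv
        rw [hUf_def, mem_filter] at hv
        rw [← hαU]
        exact Submodule.mem_map_of_mem hv.2.1
      rw [this, hUf]
    -- stabilizer cardinality
    have hSfcard : Sf.card = q - 1 := by
      have hmem : ∀ β : L, β ∈ Sf ↔ β ∈ baseUnits K L := by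
        intro β
        rw [← hfull]
        rw [hSf_def, mem_filter, hA_def, mem_filter]
        constructor
        · rintro ⟨⟨-, h0⟩, hU⟩; exact ⟨h0, hU⟩
        · rintro ⟨h0, hU⟩; exact ⟨⟨Finset.mem_univ _, h0⟩, hU⟩
      have hinj := (algebraMap K L).injective
      have hKfilter : ((univ : Finset K).filter (fun c : K => c ≠ 0)).card = q - 1 := by
        rw [Finset.filter_ne', Finset.card_erase_of_mem (Finset.mem_univ 0),
          Finset.card_univ, hK]
      rw [← hKfilter]
      symm
      apply Finset.card_bij (fun (c : K) (_ : c ∈ (univ : Finset K).filter (fun c : K => c ≠ 0)) =>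
        algebraMap K L c)
      · intro c hc
        rw [mem_filter] at hc
        rw [hmem]
        refine ⟨fun h0 => hc.2 (hinj (by rw [h0, map_zero])), c, rfl⟩
      · intro a _ b _ hab
        exact hinj hab
      · intro β hβ
        rw [hmem] at hβ
        obtain ⟨hβ0, c, hc⟩ := hβ
        refine ⟨c, ?_, hc⟩
        rw [mem_filter]
        exact ⟨Finset.mem_univ _, fun h0 => hβ0 (by rw [← hc, h0, map_zero])⟩
    -- non-stabilizer terms
    have hnon_term : ∀ α ∈ Tf, (Uf.filter (fun v => α * v ∈ U)).card = q ^ ℓ - 1 := by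
      intro α hα
      rw [hTf_def, mem_filter, hA_def, mem_filter] at hα
      obtain ⟨⟨-, hα0⟩, hαU⟩ := hα
      have hi0 : α⁻¹ ≠ 0 := inv_ne_zero hα0
      have hiU : shiftSub K L α⁻¹ U ≠ U := shiftSub_inv_ne hα0 U hαU
      have hdim := hall α⁻¹ hi0 hiU
      have hset : Uf.filter (fun v => α * v ∈ U)
          = univ.filter (fun v : L => v ∈ (U ⊓ shiftSub K L α⁻¹ U) ∧ v ≠ 0) := by
        ext v
        rw [mem_filter, hUf_def, mem_filter, mem_filter]
        simp only [Submodule.mem_inf, Finset.mem_univ, true_and]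
        rw [mem_shiftSub hi0 U v, inv_inv]
        tauto
      rw [hset, hcard, hdim]
    have hST : Sf.card + Tf.card = q ^ n - 1 := by
      rw [hSf_def, hTf_def, ← hAcard]
      exact Finset.card_filter_add_card_filter_not
        (p := fun α => shiftSub K L α U = U)
    have hsum_S : ∑ α ∈ Sf, (Uf.filter (fun v => α * v ∈ U)).card
        = Sf.card * (q ^ k - 1) := by
      rw [Finset.sum_congr rfl hstab_term, Finset.sum_const, smul_eq_mul]
    have hsum_T : ∑ α ∈ Tf, (Uf.filter (fun v => α * v ∈ U)).card
        = Tf.card * (q ^ ℓ - 1) := by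
      rw [Finset.sum_congr rfl hnon_term, Finset.sum_const, smul_eq_mul]
    have hTcard : Tf.card = (q ^ n - 1) - (q - 1) := by omega
    have hE : (q - 1) * (q ^ k - 1) + ((q ^ n - 1) - (q - 1)) * (q ^ ℓ - 1)
        = (q ^ k - 1) * (q ^ k - 1) := by
      have h := hsplit
      rw [hsum_S, hsum_T, hsum, hUf, hSfcard, hTcard] at h
      exact h
    exact orbNumeric q n k ℓ hq2 hkl h2k hE
  · -- some α has strictly smaller intersection
    push_neg at hall
    obtain ⟨β, hβ0, hβne, hβℓ⟩ := hall
    have h1 := dim_le β hβ0 hβne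
    have h2 := sup_bound β hβ0
    omega
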